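/- arXiv:2209.04603 — 2 statements merged into one kernel-verified Lean document; each statement's English description precedes it below -/
import Mathlib

section
/- Let V be a type, A : V → V → Prop a directed edge relation, and reach the reflexive-transitive closure of A. If S is a nonempty finite subset of V such that for every pair u, v ∈ S either u reaches v or v reaches u, then there exists a nonempty list l of vertices whose consecutive entries are related by the edge relation A (i.e., l is a directed walk in the graph) and which contains every vertex of S. -/
private lemma exists_walk_of_reach {V : Type*} {A : V → V → Prop} {u v : V}
    (h : Relation.ReflTransGen A u v) :
    ∃ l : List V, l.Chain' A ∧ l.head? = some u ∧ l.getLast? = some v := by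
  induction h with
  | refl => exact ⟨[u], List.isChain_singleton _, rfl, rfl⟩
  | @tail b c hub hbc ih =>
    obtain ⟨l, hc, hh, hl⟩ := ih
    refine ⟨l ++ [c], ?_, ?_, by simp⟩
    · refine List.IsChain.append hc (List.isChain_singleton _) ?_
      intro x hx y hy
      simp only [List.head?_cons, Option.mem_def, Option.some.injEq] at hy
      rw [Option.mem_def, hl] at hx
      cases hx; cases hy; exact hbc
    · cases l with
      | nil => simp at hh
      | cons a t => simpa using hh

private lemma exists_min_reach {V : Type*} {A : V → V → Prop} (S : Finset V)
    (hne : S.Nonempty)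
    (hS : ∀ u ∈ S, ∀ v ∈ S,
      Relation.ReflTransGen A u v ∨ Relation.ReflTransGen A v u) :
    ∃ m ∈ S, ∀ u ∈ S, Relation.ReflTransGen A m u := by
  classical
  induction S using Finset.induction_on with
  | empty => exact absurd hne (by simp)
  | @insert a S ha ih =>
    rcases S.eq_empty_or_nonempty with rfl | hSne
    · refine ⟨a, by simp, fun u hu => ?_⟩
      have : u = a := by simpa using hu
      subst this; exact Relation.ReflTransGen.refl
    · obtain ⟨m, hm, hmin⟩ := ih hSne
        (fun u hu v hv => hS u (by simp [hu]) v (by simp [hv]))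
      rcases hS a (by simp) m (by simp [hm]) with h | h
      · refine ⟨a, by simp, ?_⟩
        intro u hu
        rcases Finset.mem_insert.mp hu with rfl | hu
        · exact Relation.ReflTransGen.refl
        · exact h.trans (hmin u hu)
      · refine ⟨m, by simp [hm], ?_⟩
        intro u hu
        rcases Finset.mem_insert.mp hu with rfl | hu
        · exact h
        · exact hmin u hu

private lemma aux_covering_walk {V : Type*} (A : V → V → Prop) (S : Finset V)
    (hne : S.Nonempty)
    (hS : ∀ u ∈ S, ∀ v ∈ S,
      Relation.ReflTransGen A u v ∨ Relation.ReflTransGen A v u) :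
    ∃ l : List V, l ≠ [] ∧ l.Chain' A ∧ (∀ x ∈ S, x ∈ l) ∧
      ∃ h ∈ S, l.head? = some h := by
  classical
  induction S using Finset.strongInduction with
  | _ S ih =>
    obtain ⟨m, hm, hmin⟩ := exists_min_reach S hne hS
    rcases (S.erase m).eq_empty_or_nonempty with he | hEne
    · refine ⟨[m], by simp, List.isChain_singleton _, ?_, ⟨m, hm, rfl⟩⟩
      intro x hx
      have : x = m := by
        by_contra hxm
        have : x ∈ S.erase m := Finset.mem_erase.mpr ⟨hxm, hx⟩
        simp [he] at this
      simp [this]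
    · obtain ⟨l, hlne, hlc, hlcov, h, hhS, hhead⟩ :=
        ih (S.erase m) (Finset.erase_ssubset hm) hEne
          (fun u hu v hv => hS u (Finset.mem_of_mem_erase hu)
            v (Finset.mem_of_mem_erase hv))
      have hhS' : h ∈ S := Finset.mem_of_mem_erase hhS
      obtain ⟨w, hwc, hwh, hwl⟩ := exists_walk_of_reach (hmin h hhS')
      have hwne : w ≠ [] := by
        intro hw; rw [hw] at hwh; simp at hwh
      obtain ⟨t, hlt⟩ : ∃ t, l = h :: t := by
        cases l with
        | nil => exact absurd rfl hlne
        | cons a t => simp at hhead; exact ⟨t, by rw [hhead]⟩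
      refine ⟨w ++ t, by simp [hwne], ?_, ?_, ⟨m, hm, ?_⟩⟩
      · refine List.IsChain.append hwc ?_ ?_
        · rw [hlt] at hlc; exact List.IsChain.tail hlc
        · intro x hx y hy
          rw [Option.mem_def, hwl] at hx; cases hx
          rw [hlt] at hlc
          exact List.isChain_cons.mp hlc |>.1 y hy
      · intro x hx
        rcases eq_or_ne x m with rfl | hxm
        · have : x ∈ w := by
            have := hwh
            cases w with
            | nil => simp at this
            | cons a s => simp at this; simp [this]
          simp [this]
        · have hxl : x ∈ l := hlcov x (Finset.mem_erase.mpr ⟨hxm, hx⟩)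
          rw [hlt] at hxl
          rcases List.mem_cons.mp hxl with rfl | hxt
          · have : x ∈ w := List.mem_of_mem_getLast? (by rw [hwl]; rfl)
            simp [this]
          · simp [hxt]
      · cases w with
        | nil => exact absurd rfl hwne
        | cons a s => simp at hwh; simp [hwh]

/-- If a nonempty finite set `S` of vertices is pairwise comparable under
the reachability relation (the reflexive-transitive closure of the edge
relation `A`), then there is a single directed walk (a nonempty list whose
consecutive entries are related by `A`) containing every vertex of `S`. -/
theorem finset_reach_clique_exists_covering_walk
    {V : Type*} (A : V → V → Prop) (S : Finset V) (hne : S.Nonempty)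
    (hS : ∀ u ∈ S, ∀ v ∈ S,
      Relation.ReflTransGen A u v ∨ Relation.ReflTransGen A v u) :
    ∃ l : List V, l ≠ [] ∧ l.Chain' A ∧ ∀ x ∈ S, x ∈ l := by
  obtain ⟨l, h1, h2, h3, _⟩ := aux_covering_walk A S hne hS
  exact ⟨l, h1, h2, h3⟩
end

section
/- Let V be a type, A : V → V → Prop a directed edge relation, and reach the reflexive-transitive closure of A. For every nonempty finite subset S of V, the following are equivalent: (i) every pair of vertices u, v ∈ S satisfies reach u v or reach v u (S is a clique in the undirected reachability graph), and (ii) there exists a directed walk in the graph, i.e., a nonempty list of vertices whose consecutive entries are related by A, that contains every vertex of S. -/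
private lemma chain_reach_aux {V : Type*} {A : V → V → Prop} :
    ∀ {l : List V} {a x : V}, List.Chain A a l → x ∈ l → Relation.ReflTransGen A a x := by
  intro l
  induction l with
  | nil => intro a x _ hx; simp at hx
  | cons b t ih =>
    intro a x h hx
    rcases List.chain_cons.1 h with ⟨hab, ht⟩
    rcases List.mem_cons.1 hx with rfl | hx
    · exact Relation.ReflTransGen.single hab
    · exact (Relation.ReflTransGen.single hab).trans (ih ht hx)

private lemma chain_comparable {V : Type*} {A : V → V → Prop} :
    ∀ {l : List V} {a : V}, List.Chain A a l → ∀ x ∈ a :: l, ∀ y ∈ a :: l,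
      Relation.ReflTransGen A x y ∨ Relation.ReflTransGen A y x := by
  intro l
  induction l with
  | nil =>
    intro a _ x hx y hy
    simp only [List.mem_singleton] at hx hy
    subst hx; subst hy
    exact Or.inl Relation.ReflTransGen.refl
  | cons b t ih =>
    intro a h x hx y hy
    rcases List.chain_cons.1 h with ⟨hab, ht⟩
    rcases List.mem_cons.1 hx with rfl | hx2
    · rcases List.mem_cons.1 hy with rfl | hy2
      · exact Or.inl Relation.ReflTransGen.refl
      · exact Or.inl (chain_reach_aux h hy2)
    · rcases List.mem_cons.1 hy with rfl | hy2
      · exact Or.inr (chain_reach_aux h hx2)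
      · exact ih ht x hx2 y hy2

private lemma chain_append_aux {V : Type*} {A : V → V → Prop} :
    ∀ {l : List V} {a : V} {m : List V}, List.Chain A a l →
      List.Chain A (List.getLast (a :: l) (List.cons_ne_nil _ _)) m →
      List.Chain A a (l ++ m) := by
  intro l
  induction l with
  | nil => intro a m _ hm; simpa using hm
  | cons b t ih =>
    intro a m h hm
    rcases List.chain_cons.1 h with ⟨hab, ht⟩
    rw [List.getLast_cons_cons] at hm
    exact List.chain_cons.2 ⟨hab, ih ht hm⟩

private lemma splice_aux {V : Type*} {A : V → V → Prop} :
    ∀ (l : List V) (a : V), List.Chain' (Relation.ReflTransGen A) (a :: l) →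
      ∃ m, List.Chain A a m ∧ ∀ x ∈ a :: l, x ∈ a :: m := by
  intro l
  induction l with
  | nil => exact fun a _ => ⟨[], List.Chain.nil, fun x hx => hx⟩
  | cons b t ih =>
    intro a hc
    have hab : Relation.ReflTransGen A a b := (List.isChain_cons_cons.1 hc).1
    obtain ⟨c, hc1, hc2⟩ := List.exists_isChain_cons_of_relationReflTransGen hab
    obtain ⟨m, hm1, hm2⟩ := ih b (List.isChain_cons_cons.1 hc).2
    refine ⟨c ++ m, chain_append_aux hc1 (hc2 ▸ hm1), ?_⟩
    intro x hx
    rcases List.mem_cons.1 hx with rfl | hx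
    · exact List.mem_cons_self
    · rcases List.mem_cons.1 (hm2 x hx) with rfl | hx'
      · have : x ∈ a :: c := hc2 ▸ List.getLast_mem _
        rcases List.mem_cons.1 this with rfl | h'
        · exact List.mem_cons_self
        · exact List.mem_cons_of_mem _ (List.mem_append_left _ h')
      · exact List.mem_cons_of_mem _ (List.mem_append_right _ hx')

/-- For a nonempty finite vertex set `S`, `S` is a clique of the undirected
reachability graph (every two members are comparable under the
reflexive-transitive closure of the edge relation `A`) if and only if there
is a single directed walk — a nonempty list whose consecutive entries are
related by `A` — containing every vertex of `S`. -/
theorem reach_clique_iff_exists_covering_walk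
    {V : Type*} (A : V → V → Prop) (S : Finset V) (hne : S.Nonempty) :
    (∀ u ∈ S, ∀ v ∈ S,
        Relation.ReflTransGen A u v ∨ Relation.ReflTransGen A v u) ↔
      ∃ l : List V, l ≠ [] ∧ l.Chain' A ∧ ∀ x ∈ S, x ∈ l := by
  constructor
  · intro h
    classical
    let r : {x // x ∈ S} → {x // x ∈ S} → Prop :=
      fun a b => Relation.ReflTransGen A a.1 b.1
    haveI : DecidableRel r := Classical.decRel r
    haveI : IsTotal {x // x ∈ S} r := ⟨fun a b => h a.1 a.2 b.1 b.2⟩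
    haveI : IsTrans {x // x ∈ S} r := ⟨fun _ _ _ => Relation.ReflTransGen.trans⟩
    let l₀ := List.insertionSort r S.attach.toList
    have hsorted : List.Pairwise r l₀ := List.pairwise_insertionSort r _
    let l₁ := l₀.map Subtype.val
    have hpw : List.Pairwise (Relation.ReflTransGen A) l₁ :=
      (List.pairwise_map).2 hsorted
    haveI : IsTrans V (Relation.ReflTransGen A) :=
      ⟨fun _ _ _ => Relation.ReflTransGen.trans⟩
    have hchain : List.Chain' (Relation.ReflTransGen A) l₁ :=
      List.isChain_iff_pairwise.2 hpw
    have hmem : ∀ x ∈ S, x ∈ l₁ := by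
      intro x hx
      refine List.mem_map.2 ⟨⟨x, hx⟩, ?_, rfl⟩
      exact ((List.perm_insertionSort r _).mem_iff).2 (by simp)
    have hne1 : l₁ ≠ [] := by
      obtain ⟨x, hx⟩ := hne
      exact List.ne_nil_of_mem (hmem x hx)
    obtain ⟨a, t, ht⟩ := List.exists_cons_of_ne_nil hne1
    rw [ht] at hchain hmem
    obtain ⟨m, hm1, hm2⟩ := splice_aux t a hchain
    exact ⟨a :: m, List.cons_ne_nil _ _, hm1, fun x hx => hm2 x (hmem x hx)⟩
  · rintro ⟨l, hn, hl, hmem⟩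
    intro u hu v hv
    obtain ⟨a, t, rfl⟩ := List.exists_cons_of_ne_nil hn
    exact chain_comparable hl u (hmem u hu) v (hmem v hv)
end
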